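/- Let μ/ν be a skew shape of length n. If θ = (N) with N = |μ/ν|, then for all w ∈ S_n, K_{(N), μ+δ-w(ν+δ)} = ĥ(w^{-1}), where h is the Hessenberg function of μ/ν and ĥ is its indicator. Consequently Γ^{(N)}_{μ/ν}(w) = (n!/|C(w)|) Σ_{w' ∈ C(w)} ĥ(w'). -/

import Mathlib

open Equiv

/-- `T i j` is the entry of a filling in row `i`, column `j` (0-based);
entries outside the diagram of `shape` are `0`.  Rows weakly increase,
columns strictly increase. -/
def IsSSYT (shape : ℕ → ℕ) (T : ℕ → ℕ → ℕ) : Prop :=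
  (∀ i j, j + 1 < shape i → T i j ≤ T i (j + 1)) ∧
  (∀ i j, j < shape (i + 1) → T i j < T (i + 1) j) ∧
  (∀ i j, shape i ≤ j → T i j = 0)

/-- The Kostka number: the number of semistandard Young tableaux of the given
shape in which the entry `m` appears exactly `c m` times. -/
noncomputable def kostka (shape : ℕ → ℕ) (c : ℕ → ℕ) : ℕ :=
  Set.ncard {T : ℕ → ℕ → ℕ | IsSSYT shape T ∧
    ∀ m : ℕ, {p : ℕ × ℕ | p.2 < shape p.1 ∧ T p.1 p.2 = m}.ncard = c m}

open Classical in
/-- Kostka number for an integer content, with the convention that it is `0`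
whenever the content has a negative entry. -/
noncomputable def kostkaZ (shape : ℕ → ℕ) (c : ℕ → ℤ) : ℕ :=
  if ∀ m, 0 ≤ c m then kostka shape (fun m => (c m).toNat) else 0

/-- The hook shape `(N - k, 1, ..., 1)` with `k` trailing rows of length 1. -/
def hookShape (N k : ℕ) : ℕ → ℕ :=
  fun i => if i = 0 then N - k else if i ≤ k then 1 else 0

/-- Extend a sequence indexed by `Fin n` to all of `ℕ` by zeros. -/
def extendSeq {n : ℕ} (a : Fin n → ℤ) : ℕ → ℤ :=
  fun m => if h : m < n then a ⟨m, h⟩ else 0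

/-- The staircase `δ = (n-1, n-2, ..., 1, 0)`. -/
def deltaSeq (n : ℕ) : Fin n → ℤ := fun i => (n : ℤ) - 1 - (i.val : ℤ)

/-- The sequence `μ + δ - w(ν + δ)`, where a permutation acts on sequences by
shuffling: `(w(a))_i = a_{w⁻¹(i)}`. -/
def hatSeq {n : ℕ} (μ ν : Fin n → ℕ) (w : Perm (Fin n)) : Fin n → ℤ :=
  fun i => ((μ i : ℤ) + deltaSeq n i) - ((ν (w⁻¹ i) : ℤ) + deltaSeq n (w⁻¹ i))

/-- `h` is the Hessenberg function of the skew shape `μ/ν`: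
`h j = max { i | μ i - ν j + j - i ≥ 0 }`. -/
def IsHessOf {n : ℕ} (μ ν : Fin n → ℕ) (h : Fin n → Fin n) : Prop :=
  ∀ j : Fin n, (ν j + ((h j : ℕ)) ≤ μ (h j) + (j : ℕ)) ∧
    ∀ i : Fin n, ν j + (i : ℕ) ≤ μ i + (j : ℕ) → i ≤ h j

/-- The indicator `ĥ(w)` of the condition `w(i) ≤ h(i)` for all `i`. -/
def hhat {n : ℕ} (h : Fin n → Fin n) (w : Perm (Fin n)) : ℕ :=
  if ∀ i, w i ≤ h i then 1 else 0

/-- The modified Hessenberg function `h^J`: `h^J(i) = h(i) - 1` when `i ∈ J` and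
`μ_{h(i)} - ν_i + i - h(i) = 0`, and `h^J(i) = h(i)` otherwise. -/
def hJfun {n : ℕ} (μ ν : Fin n → ℕ) (h : Fin n → Fin n) (J : Finset (Fin n)) :
    Fin n → Fin n :=
  fun i => if i ∈ J ∧ μ (h i) + (i : ℕ) = ν i + ((h i : ℕ)) then
      ⟨(h i : ℕ) - 1, Nat.lt_of_le_of_lt (Nat.sub_le _ _) (h i).isLt⟩
    else h i

open Classical in
/-- The conjugacy class of `w` in the symmetric group, as a finset. -/
noncomputable def conjClass {n : ℕ} (w : Perm (Fin n)) : Finset (Perm (Fin n)) :=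
  Finset.univ.filter (fun v => IsConj w v)

/-- The Stanley–Stembridge character
`Γ_h(w) = (n! / |C(w)|) · Σ_{w' ∈ C(w)} ĥ(w')`. -/
noncomputable def GammaH {n : ℕ} (h : Fin n → Fin n) (w : Perm (Fin n)) : ℚ :=
  ((n.factorial : ℚ) / ((conjClass w).card : ℚ)) * ∑ v ∈ conjClass w, (hhat h v : ℚ)

/-- The immanant character
`Γ^θ_{μ/ν}(w) = (n! / |C(w)|) · Σ_{w' ∈ C(w)} K_{θ, μ+δ-w'(ν+δ)}`. -/
noncomputable def GammaTheta {n : ℕ} (shape : ℕ → ℕ) (μ ν : Fin n → ℕ)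
    (w : Perm (Fin n)) : ℚ :=
  ((n.factorial : ℚ) / ((conjClass w).card : ℚ)) *
    ∑ v ∈ conjClass w, (kostkaZ shape (extendSeq (hatSeq μ ν v)) : ℚ)


/-! ### Auxiliary lemmas -/

section Aux

/-- A downward-closed subset of `Set.Iio N` in `ℕ` is an initial segment. -/
lemma dc_eq_Iio {S : Set ℕ} {N : ℕ} (hsub : S ⊆ Set.Iio N)
    (hdc : ∀ j ∈ S, ∀ j', j' ≤ j → j' ∈ S) : S = Set.Iio S.ncard := by
  have hfin : S.Finite := (Set.finite_Iio N).subset hsub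
  ext j
  simp only [Set.mem_Iio]
  constructor
  · intro hj
    have h1 : Set.Iic j ⊆ S := fun x hx => hdc j hj x hx
    have h2 : (Set.Iic j).ncard ≤ S.ncard := Set.ncard_le_ncard h1 hfin
    have h3 : (Set.Iic j).ncard = j + 1 := by
      rw [← Finset.coe_Iic, Set.ncard_coe_finset, Nat.card_Iic]
    omega
  · intro hj
    by_contra hjS
    have h1 : S ⊆ Set.Iio j := by
      intro s hs
      simp only [Set.mem_Iio]
      by_contra hle
      exact hjS (hdc s hs j (le_of_not_gt hle))
    have h2 : S.ncard ≤ (Set.Iio j).ncard := Set.ncard_le_ncard h1 (Set.finite_Iio j)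
    have h3 : (Set.Iio j).ncard = j := by
      rw [← Finset.coe_Iio, Set.ncard_coe_finset, Nat.card_Iio]
    omega

lemma hookShape_zero (N i : ℕ) : hookShape N 0 i = if i = 0 then N else 0 := by
  unfold hookShape
  rcases eq_or_ne i 0 with h | h
  · simp [h]
  · simp [h, Nat.le_zero]

lemma content_set_eq (N : ℕ) (T : ℕ → ℕ → ℕ) (m : ℕ) :
    {p : ℕ × ℕ | p.2 < hookShape N 0 p.1 ∧ T p.1 p.2 = m} =
      Prod.mk 0 '' {j | j < N ∧ T 0 j = m} := by
  ext ⟨a, b⟩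
  simp only [Set.mem_setOf_eq, Set.mem_image, Prod.mk.injEq, hookShape_zero]
  constructor
  · rintro ⟨hb, hT⟩
    rcases eq_or_ne a 0 with rfl | ha
    · exact ⟨b, ⟨by simpa using hb, hT⟩, rfl, rfl⟩
    · simp [ha] at hb
  · rintro ⟨j, ⟨hj, hT⟩, rfl, rfl⟩
    simp [hj, hT]

lemma content_ncard_eq (N : ℕ) (T : ℕ → ℕ → ℕ) (m : ℕ) :
    {p : ℕ × ℕ | p.2 < hookShape N 0 p.1 ∧ T p.1 p.2 = m}.ncard =
      {j | j < N ∧ T 0 j = m}.ncard := by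
  rw [content_set_eq, Set.ncard_image_of_injective _ (Prod.mk_right_injective 0)]

/-- Partial sums of a content function. -/
noncomputable def Fc (c : ℕ → ℕ) (m : ℕ) : ℕ := ∑ m' ∈ Finset.range m, c m'

/-- The entry appearing in position `j` of the unique single-row tableau. -/
noncomputable def gc (c : ℕ → ℕ) (j : ℕ) : ℕ := sInf {m | j < Fc c (m + 1)}

/-- The canonical single-row tableau with content `c`. -/
noncomputable def T0 (N : ℕ) (c : ℕ → ℕ) : ℕ → ℕ → ℕ :=
  fun i j => if i = 0 ∧ j < N then gc c j else 0

lemma Fc_mono (c : ℕ → ℕ) : Monotone (Fc c) := fun _ _ hab =>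
  Finset.sum_le_sum_of_subset (Finset.range_subset_range.2 hab)

lemma Fc_succ (c : ℕ → ℕ) (m : ℕ) : Fc c (m + 1) = Fc c m + c m :=
  Finset.sum_range_succ c m

lemma Fc_eq_of_ge {N n₀ : ℕ} {c : ℕ → ℕ} (hc0 : ∀ m, n₀ ≤ m → c m = 0)
    (hsum : ∑ m ∈ Finset.range n₀, c m = N) : ∀ k, n₀ ≤ k → Fc c k = N := by
  intro k hk
  rw [← hsum]
  exact (Finset.sum_subset (Finset.range_subset_range.2 hk)
    (fun x _ hx' => hc0 x (by simpa using hx'))).symm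

lemma Fc_le {N n₀ : ℕ} {c : ℕ → ℕ} (hc0 : ∀ m, n₀ ≤ m → c m = 0)
    (hsum : ∑ m ∈ Finset.range n₀, c m = N) : ∀ m, Fc c m ≤ N := by
  intro m
  rcases le_total m n₀ with h | h
  · calc Fc c m ≤ Fc c n₀ := Fc_mono c h
      _ = N := Fc_eq_of_ge hc0 hsum n₀ le_rfl
  · exact le_of_eq (Fc_eq_of_ge hc0 hsum m h)

lemma gc_spec' {c : ℕ → ℕ} {j m : ℕ} (hm : j < Fc c (m + 1)) :
    j < Fc c (gc c j + 1) :=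
  Nat.sInf_mem (⟨m, hm⟩ : {m | j < Fc c (m + 1)}.Nonempty)

lemma gc_lb (c : ℕ → ℕ) (j : ℕ) : Fc c (gc c j) ≤ j := by
  rcases Nat.eq_zero_or_pos (gc c j) with h | h
  · rw [h]; simp [Fc]
  · have hlt : gc c j - 1 < sInf {m | j < Fc c (m + 1)} := by
      show gc c j - 1 < gc c j
      omega
    have hnm : gc c j - 1 ∉ {m | j < Fc c (m + 1)} := Nat.notMem_of_lt_sInf hlt
    simp only [Set.mem_setOf_eq, not_lt] at hnm
    have heq : gc c j - 1 + 1 = gc c j := by omega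
    rwa [heq] at hnm

lemma gc_eq {c : ℕ → ℕ} {j m : ℕ} (h1 : Fc c m ≤ j) (h2 : j < Fc c (m + 1)) :
    gc c j = m := by
  have hle : gc c j ≤ m := Nat.sInf_le h2
  rcases lt_or_eq_of_le hle with hlt | heq
  · exfalso
    have hspec := gc_spec' h2
    have : Fc c (gc c j + 1) ≤ Fc c m := Fc_mono c (by omega)
    omega
  · exact heq

lemma gc_mono {c : ℕ → ℕ} {j j' m : ℕ} (hle : j ≤ j') (hj' : j' < Fc c (m + 1)) :
    gc c j ≤ gc c j' :=
  Nat.sInf_le (lt_of_le_of_lt hle (gc_spec' hj'))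

/-- The Kostka number of a single-row shape with a content of total size `N`
is `1`. -/
lemma kostka_row {N n₀ : ℕ} {c : ℕ → ℕ} (hc0 : ∀ m, n₀ ≤ m → c m = 0)
    (hsum : ∑ m ∈ Finset.range n₀, c m = N) :
    kostka (hookShape N 0) c = 1 := by
  have hFN : ∀ k, n₀ ≤ k → Fc c k = N := Fc_eq_of_ge hc0 hsum
  have hspec : ∀ {j : ℕ}, j < N → j < Fc c (gc c j + 1) := by
    intro j hj
    exact gc_spec' (m := n₀) (by rw [hFN (n₀ + 1) (by omega)]; exact hj)
  have hmono : ∀ {j j' : ℕ}, j ≤ j' → j' < N → gc c j ≤ gc c j' := by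
    intro j j' hle hj'
    exact gc_mono (m := n₀) hle (by rw [hFN (n₀ + 1) (by omega)]; exact hj')
  have hT0 : ∀ j, j < N → T0 N c 0 j = gc c j := by
    intro j hj; simp [T0, hj]
  have hset : {T : ℕ → ℕ → ℕ | IsSSYT (hookShape N 0) T ∧
      ∀ m : ℕ, {p : ℕ × ℕ | p.2 < hookShape N 0 p.1 ∧ T p.1 p.2 = m}.ncard = c m}
      = {T0 N c} := by
    ext T
    simp only [Set.mem_setOf_eq, Set.mem_singleton_iff]
    constructor
    · rintro ⟨⟨hrow, _, hzero⟩, hcont⟩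
      have hTmono : ∀ j j', j ≤ j' → j' < N → T 0 j ≤ T 0 j' := by
        intro j j' hlej hltj
        induction j' with
        | zero =>
          have : j = 0 := by omega
          simp [this]
        | succ k ih =>
          rcases Nat.lt_or_ge j (k + 1) with hc | hc
          · have h1 : T 0 j ≤ T 0 k := ih (by omega) (by omega)
            have h2 : T 0 k ≤ T 0 (k + 1) := hrow 0 k (by rw [hookShape_zero]; simpa)
            omega
          · have : j = k + 1 := by omega
            simp [this]
      have hS : ∀ m, {j | j < N ∧ T 0 j < m} = Set.Iio (Fc c m) := by
        intro m
        induction m with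
        | zero => ext j; simp [Fc]
        | succ m ih =>
          have hsplit : {j | j < N ∧ T 0 j < m + 1} =
              {j | j < N ∧ T 0 j < m} ∪ {j | j < N ∧ T 0 j = m} := by
            ext j; simp only [Set.mem_setOf_eq, Set.mem_union]; omega
          have hdisj : Disjoint {j | j < N ∧ T 0 j < m} {j | j < N ∧ T 0 j = m} := by
            rw [Set.disjoint_left]
            rintro j ⟨_, h1⟩ ⟨_, h2⟩
            omega
          have hfin1 : {j | j < N ∧ T 0 j < m}.Finite :=
            (Set.finite_Iio N).subset (fun x hx => hx.1)
          have hfin2 : {j | j < N ∧ T 0 j = m}.Finite :=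
            (Set.finite_Iio N).subset (fun x hx => hx.1)
          have hcard2 : {j | j < N ∧ T 0 j = m}.ncard = c m := by
            have := hcont m
            rwa [content_ncard_eq] at this
          have hcard : {j | j < N ∧ T 0 j < m + 1}.ncard = Fc c (m + 1) := by
            rw [hsplit, Set.ncard_union_eq hdisj hfin1 hfin2, ih, hcard2]
            rw [Fc_succ]
            congr 1
            rw [← Finset.coe_Iio, Set.ncard_coe_finset, Nat.card_Iio]
          have hdc := dc_eq_Iio (S := {j | j < N ∧ T 0 j < m + 1}) (N := N)
            (fun x hx => hx.1)
            (fun j hj j' hj' => ⟨lt_of_le_of_lt hj' hj.1,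
              lt_of_le_of_lt (hTmono j' j hj' hj.1) hj.2⟩)
          rw [hdc, hcard]
      funext i j
      rcases eq_or_ne i 0 with rfl | hi
      · rcases Nat.lt_or_ge j N with hj | hj
        · have hmem : j ∈ {j' | j' < N ∧ T 0 j' < T 0 j + 1} := ⟨hj, by omega⟩
          have hnmem : j ∉ {j' | j' < N ∧ T 0 j' < T 0 j} := by
            simp only [Set.mem_setOf_eq]
            omega
          rw [hS (T 0 j + 1)] at hmem
          rw [hS (T 0 j)] at hnmem
          simp only [Set.mem_Iio, not_lt] at hmem hnmem
          have hg : gc c j = T 0 j := gc_eq hnmem hmem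
          rw [hT0 j hj, hg]
        · have h1 : T 0 j = 0 := hzero 0 j (by rw [hookShape_zero]; simpa)
          have h2 : ¬ j < N := by omega
          simp [T0, h1, h2]
      · have h1 : T i j = 0 := hzero i j (by rw [hookShape_zero]; simp [hi])
        simp [T0, h1, hi]
    · rintro rfl
      refine ⟨⟨?_, ?_, ?_⟩, ?_⟩
      · intro i j hj
        rw [hookShape_zero] at hj
        rcases eq_or_ne i 0 with rfl | hi
        · have h2 : j + 1 < N := by simpa using hj
          have h1 : j < N := by omega
          rw [hT0 j h1, hT0 (j + 1) h2]
          exact hmono (by omega) h2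
        · simp [hi] at hj
      · intro i j hj
        rw [hookShape_zero] at hj
        simp at hj
      · intro i j hj
        rw [hookShape_zero] at hj
        rcases eq_or_ne i 0 with rfl | hi
        · have h2 : ¬ j < N := by simp at hj; omega
          simp [T0, h2]
        · simp [T0, hi]
      · intro m
        rw [content_ncard_eq]
        have hseteq : {j | j < N ∧ T0 N c 0 j = m} = Set.Ico (Fc c m) (Fc c (m + 1)) := by
          ext j
          simp only [Set.mem_setOf_eq, Set.mem_Ico]
          constructor
          · rintro ⟨hj, hg⟩
            rw [hT0 j hj] at hg
            subst hg
            exact ⟨gc_lb c j, hspec hj⟩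
          · rintro ⟨h1, h2⟩
            have hj : j < N := lt_of_lt_of_le h2 (Fc_le hc0 hsum (m + 1))
            have hgj := gc_eq h1 h2
            rw [hT0 j hj, hgj]
            exact ⟨hj, rfl⟩
        rw [hseteq, ← Finset.coe_Ico, Set.ncard_coe_finset, Nat.card_Ico, Fc_succ]
        omega
  unfold kostka
  rw [hset]
  exact Set.ncard_singleton _

lemma hess_iff {n : ℕ} {μ ν : Fin n → ℕ} (hμ : Antitone μ)
    {h : Fin n → Fin n} (hh : IsHessOf μ ν h) (i j : Fin n) :
    ν j + (i : ℕ) ≤ μ i + (j : ℕ) ↔ i ≤ h j := by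
  constructor
  · exact (hh j).2 i
  · intro hij
    have h1 := (hh j).1
    have h2 : μ (h j) ≤ μ i := hμ hij
    have h3 : (i : ℕ) ≤ ((h j : Fin n) : ℕ) := hij
    omega

/-- The first part of Statement 10, for an arbitrary permutation. -/
lemma kostka_hatSeq {n N : ℕ} (μ ν : Fin n → ℕ) (hμ : Antitone μ)
    (hle : ∀ i, ν i ≤ μ i) (hN : N = ∑ i : Fin n, (μ i - ν i))
    (h : Fin n → Fin n) (hh : IsHessOf μ ν h) (w : Perm (Fin n)) :
    kostkaZ (hookShape N 0)
        (extendSeq (fun i : Fin n =>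
          ((μ i : ℤ) + deltaSeq n i) - ((ν (w i) : ℤ) + deltaSeq n (w i)))) =
      hhat h w⁻¹ := by
  set a : Fin n → ℤ := fun i =>
    ((μ i : ℤ) + deltaSeq n i) - ((ν (w i) : ℤ) + deltaSeq n (w i)) with ha
  have hext : ∀ i : Fin n, extendSeq a (i : ℕ) = a i := by
    intro i; simp [extendSeq]
  have key : ∀ i : Fin n, (0 ≤ a i ↔ i ≤ h (w i)) := by
    intro i
    rw [← hess_iff hμ hh i (w i)]
    simp only [ha, deltaSeq]
    have hi : (i : ℕ) < n := i.isLt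
    have hwi : ((w i : Fin n) : ℕ) < n := (w i).isLt
    constructor <;> intro hyp <;> omega
  by_cases hcond : ∀ i : Fin n, w⁻¹ i ≤ h i
  · have hpos : ∀ i : Fin n, 0 ≤ a i := by
      intro i
      rw [key i]
      have := hcond (w i)
      rwa [Perm.inv_def, Equiv.symm_apply_apply] at this
    have hnn : ∀ m, 0 ≤ extendSeq a m := by
      intro m
      unfold extendSeq
      split
      · exact hpos _
      · exact le_refl 0
    rw [hhat, if_pos hcond, kostkaZ, if_pos hnn]
    apply kostka_row (n₀ := n)
    · intro m hm
      have : ¬ m < n := by omega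
      simp [extendSeq, this]
    · have h2 : ((∑ m ∈ Finset.range n, (extendSeq a m).toNat : ℕ) : ℤ) = (N : ℤ) := by
        push_cast
        rw [← Fin.sum_univ_eq_sum_range (fun m => ((extendSeq a m).toNat : ℤ)) n]
        have hterm : ∀ i : Fin n, ((extendSeq a (i : ℕ)).toNat : ℤ) = a i := by
          intro i
          rw [hext i, Int.toNat_of_nonneg (hpos i)]
        rw [Finset.sum_congr rfl (fun i _ => hterm i)]
        have hNZ : (N : ℤ) = ∑ i : Fin n, ((μ i : ℤ) - (ν i : ℤ)) := by
          rw [hN, Nat.cast_sum]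
          exact Finset.sum_congr rfl (fun i _ => by
            rw [Nat.cast_sub (hle i)])
        rw [hNZ, ha]
        rw [Finset.sum_sub_distrib, Finset.sum_sub_distrib,
          Equiv.sum_comp w (fun j => ((ν j : ℤ) + deltaSeq n j)),
          Finset.sum_add_distrib, Finset.sum_add_distrib]
        ring
      exact_mod_cast h2
  · rw [hhat, if_neg hcond, kostkaZ, if_neg]
    intro hnn
    push_neg at hcond
    obtain ⟨j, hj⟩ := hcond
    set i : Fin n := w⁻¹ j with hi
    have hwi : w i = j := w.apply_symm_apply j
    have hna : ¬ (0 ≤ a i) := by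
      rw [key i, hwi]
      exact not_le.mpr hj
    exact hna (by rw [← hext i]; exact hnn (i : ℕ))

end Aux

/-- Lemma 2.10: for `θ = (N)`,
`K_{(N), μ+δ-w(ν+δ)} = ĥ(w⁻¹)`, and consequently
`Γ^{(N)}_{μ/ν}(w) = (n!/|C(w)|) Σ_{w' ∈ C(w)} ĥ(w')`. -/
theorem stmt10 {n N : ℕ} (μ ν : Fin n → ℕ) (hμ : Antitone μ) (hν : Antitone ν)
    (hle : ∀ i, ν i ≤ μ i) (hN : N = ∑ i : Fin n, (μ i - ν i))
    (h : Fin n → Fin n) (hh : IsHessOf μ ν h) (w : Perm (Fin n)) :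
    kostkaZ (hookShape N 0)
        (extendSeq (fun i : Fin n =>
          ((μ i : ℤ) + deltaSeq n i) - ((ν (w i) : ℤ) + deltaSeq n (w i)))) =
      hhat h w⁻¹ ∧
    GammaTheta (hookShape N 0) μ ν w =
      ((n.factorial : ℚ) / ((conjClass w).card : ℚ)) *
        ∑ v ∈ conjClass w, (hhat h v : ℚ) := by
  constructor
  · exact kostka_hatSeq μ ν hμ hle hN h hh w
  · unfold GammaTheta
    congr 1
    apply Finset.sum_congr rfl
    intro v hv
    congr 1
    have hk := kostka_hatSeq μ ν hμ hle hN h hh v⁻¹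
    rw [inv_inv] at hk
    exact hk
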